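/- Let θ : ℝ/ℤ → ℝ be Lipschitz with ‖θ'‖_∞ ≤ n, θ(x) = 0, and n ≥ 4. Then the n-th Fejér mean satisfies |σ_n θ(x)| ≤ 4 + ‖θ‖_∞/4. -/

import Mathlib

open Real intervalIntegral

/-- The Fejér kernel with period 1. -/
noncomputable def fejerKernel (n : ℕ) (y : ℝ) : ℝ :=
  (1 / n) * (Real.sin (n * π * y) / Real.sin (π * y)) ^ 2

/-- The `n`-th Fejér mean of a 1-periodic function `θ` at `x`:
`σ_n θ(x) = ∫_{-1/2}^{1/2} θ(x - y) F_n(y) dy`. -/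
noncomputable def fejerMean (n : ℕ) (θ : ℝ → ℝ) (x : ℝ) : ℝ :=
  ∫ y in (-(1/2) : ℝ)..(1/2), θ (x - y) * fejerKernel n y

-- auxiliary lemmas
lemma abs_sin_nat_mul_le' (n : ℕ) (t : ℝ) : |Real.sin (n * t)| ≤ n * |Real.sin t| := by
  induction n with
  | zero => simp
  | succ k ih =>
    have h : ((k : ℝ) + 1) * t = k * t + t := by ring
    push_cast
    rw [h, Real.sin_add]
    calc |Real.sin (k*t) * Real.cos t + Real.cos (k*t) * Real.sin t|
        ≤ |Real.sin (k*t) * Real.cos t| + |Real.cos (k*t) * Real.sin t| := abs_add_le _ _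
      _ = |Real.sin (k*t)| * |Real.cos t| + |Real.cos (k*t)| * |Real.sin t| := by
          rw [abs_mul, abs_mul]
      _ ≤ (k * |Real.sin t|) * 1 + 1 * |Real.sin t| := by
          gcongr
          · exact Real.abs_cos_le_one t
          · exact Real.abs_cos_le_one _
      _ = ((k : ℝ) + 1) * |Real.sin t| := by ring

lemma fejerKernel_nonneg (n : ℕ) (y : ℝ) : 0 ≤ fejerKernel n y := by
  unfold fejerKernel; positivity

lemma fejerKernel_le (n : ℕ) (hn : 0 < n) (y : ℝ) : fejerKernel n y ≤ n := by
  unfold fejerKernel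
  rcases eq_or_ne (Real.sin (π * y)) 0 with h | h
  · rw [h, div_zero]
    simp
  · have h1 : |Real.sin (n * π * y)| ≤ n * |Real.sin (π * y)| := by
      have := abs_sin_nat_mul_le' n (π * y)
      rwa [← mul_assoc] at this
    have h2 : (Real.sin (n * π * y) / Real.sin (π * y)) ^ 2 ≤ (n : ℝ) ^ 2 := by
      rw [div_pow, div_le_iff₀ (by positivity)]
      calc Real.sin (n * π * y) ^ 2 = |Real.sin (n * π * y)| ^ 2 := (sq_abs _).symm
        _ ≤ ((n : ℝ) * |Real.sin (π * y)|) ^ 2 := by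
            gcongr
        _ = (n : ℝ) ^ 2 * Real.sin (π * y) ^ 2 := by rw [mul_pow, sq_abs]
    calc (1 / (n:ℝ)) * (Real.sin (n * π * y) / Real.sin (π * y)) ^ 2
        ≤ (1 / (n:ℝ)) * (n:ℝ)^2 := by gcongr
      _ = (n:ℝ) := by field_simp

lemma fejerKernel_le_tail (n : ℕ) (hn : 0 < n) {y : ℝ} (h0 : y ≠ 0) (h2 : |y| ≤ 1/2) :
    fejerKernel n y ≤ (1 / (4 * n)) * (y ^ 2)⁻¹ := by
  unfold fejerKernel
  have hsin : 2 * |y| ≤ |Real.sin (π * y)| := by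
    have hx : |π * y| ≤ π / 2 := by
      rw [abs_mul, abs_of_pos Real.pi_pos]
      calc π * |y| ≤ π * (1/2) := by gcongr
        _ = π / 2 := by ring
    have := Real.mul_abs_le_abs_sin hx
    rw [abs_mul, abs_of_pos Real.pi_pos] at this
    calc 2 * |y| = 2 / π * (π * |y|) := by field_simp
      _ ≤ |Real.sin (π * y)| := this
  have hy2 : (0:ℝ) < y ^ 2 := by positivity
  have hsq : 4 * y ^ 2 ≤ Real.sin (π * y) ^ 2 := by
    calc 4 * y ^ 2 = (2 * |y|) ^ 2 := by rw [mul_pow, sq_abs]; ring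
      _ ≤ |Real.sin (π * y)| ^ 2 := by gcongr
      _ = Real.sin (π * y) ^ 2 := sq_abs _
  have hb : (0:ℝ) < Real.sin (π * y) ^ 2 := lt_of_lt_of_le (by positivity) hsq
  have h3 : (Real.sin (n * π * y) / Real.sin (π * y)) ^ 2 ≤ 1 / (4 * y ^ 2) := by
    rw [div_pow]
    exact div_le_div₀ (by norm_num) (Real.sin_sq_le_one _) (by positivity) hsq
  calc (1 / (n:ℝ)) * (Real.sin (n * π * y) / Real.sin (π * y)) ^ 2
      ≤ (1 / (n:ℝ)) * (1 / (4 * y ^ 2)) := by gcongr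
    _ = (1 / (4 * n)) * (y ^ 2)⁻¹ := by field_simp

/-- If `θ` is 1-periodic, Lipschitz with `‖θ'‖_∞ ≤ n`, `θ(x) = 0` and `n ≥ 4`, then
`|σ_n θ(x)| ≤ 4 + ‖θ‖_∞ / 4`. -/
theorem abs_fejerMean_le_of_deriv_le (n : ℕ) (hn : 4 ≤ n) (θ : ℝ → ℝ)
    (hper : Function.Periodic θ 1) (hdiff : Differentiable ℝ θ)
    (hlip : ∀ t : ℝ, |deriv θ t| ≤ n) (x : ℝ) (hx : θ x = 0) :
    |fejerMean n θ x| ≤ 4 + (⨆ t : ℝ, |θ t|) / 4 := by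
  have hn0 : 0 < n := by omega
  set N : ℝ := (n : ℝ) with hNdef
  have hN : (4:ℝ) ≤ N := by rw [hNdef]; exact_mod_cast hn
  have hN0 : (0:ℝ) < N := by linarith
  set M : ℝ := ⨆ t : ℝ, |θ t| with hMdef
  have hθc : Continuous θ := hdiff.continuous
  have hbdd : BddAbove (Set.range fun t => |θ t|) := by
    have hp : Function.Periodic (fun t => |θ t|) 1 := fun t => by simp [hper t]
    exact (hp.isBounded_of_continuous one_ne_zero hθc.abs).bddAbove
  have hMb : ∀ t, |θ t| ≤ M := fun t => le_ciSup hbdd t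
  have hM0 : 0 ≤ M := le_trans (by simp [hx]) (hMb x)
  have hlip' : ∀ b : ℝ, |θ b| ≤ N * |b - x| := by
    intro b
    have := Convex.norm_image_sub_le_of_norm_deriv_le (f := θ) (s := Set.univ) (C := N)
      (fun t _ => hdiff t) (fun t _ => by simpa [Real.norm_eq_abs] using hlip t)
      convex_univ (Set.mem_univ x) (Set.mem_univ b)
    simpa [Real.norm_eq_abs, hx] using this
  set g : ℝ → ℝ := fun y => θ (x - y) * fejerKernel n y with hgdef
  have hFnn : ∀ y, 0 ≤ fejerKernel n y := fejerKernel_nonneg n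
  have hFle : ∀ y, fejerKernel n y ≤ N := fejerKernel_le n hn0
  have hgabs : ∀ y, |g y| = |θ (x - y)| * fejerKernel n y := by
    intro y
    rw [hgdef, abs_mul, abs_of_nonneg (hFnn y)]
  have hgbound : ∀ y, |g y| ≤ M * N := by
    intro y
    rw [hgabs y]
    exact mul_le_mul (hMb _) (hFle y) (hFnn y) hM0
  have hFmeas : Measurable (fejerKernel n) := by
    unfold fejerKernel; fun_prop
  have hgmeas : Measurable g :=
    (hθc.comp (continuous_const.sub continuous_id)).measurable.mul hFmeas
  have hgint : IntervalIntegrable g MeasureTheory.volume (-(1/2)) (1/2) := by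
    apply IntervalIntegrable.mono_fun' (g := fun _ => M * N) intervalIntegrable_const
      hgmeas.aestronglyMeasurable
    exact Filter.Eventually.of_forall fun y => by
      simpa [Real.norm_eq_abs] using hgbound y
  set a : ℝ := 2 / N with hadef
  have ha0 : 0 < a := by positivity
  have ha2 : a ≤ 1/2 := by
    rw [hadef, div_le_div_iff₀ hN0 (by norm_num : (0:ℝ) < 2)]
    linarith
  have hsub : ∀ c d : ℝ, -(1/2) ≤ c → c ≤ d → d ≤ 1/2 →
      IntervalIntegrable (fun y => |g y|) MeasureTheory.volume c d := by
    intro c d h1 h2 h3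
    exact hgint.abs.mono_set (Set.uIcc_subset_uIcc
      (Set.mem_uIcc.2 (Or.inl ⟨h1, by linarith⟩))
      (Set.mem_uIcc.2 (Or.inl ⟨by linarith, h3⟩)))
  -- value of tail integrals
  have hzpow : ∀ c d : ℝ, (0:ℝ) ∉ Set.uIcc c d →
      ∫ y in c..d, (y^2)⁻¹ = c⁻¹ - d⁻¹ := by
    intro c d h
    have he : Set.EqOn (fun y : ℝ => (y^2)⁻¹) (fun y : ℝ => y ^ (-2:ℤ)) (Set.uIcc c d) := by
      intro y _
      show ((y:ℝ)^2)⁻¹ = y^(-2:ℤ)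
      rw [zpow_neg]
      norm_cast
    rw [intervalIntegral.integral_congr he, integral_zpow (Or.inr ⟨by norm_num, h⟩)]
    norm_num
    ring
  -- middle integral value
  have habsint : ∫ y in (-a)..a, |y| = a ^ 2 := by
    have h1 : (∫ y in (-a)..(0:ℝ), |y|) = a^2/2 := by
      rw [intervalIntegral.integral_congr (g := fun y : ℝ => -y)
        (fun y hy => by
          rw [Set.uIcc_of_le (by linarith : -a ≤ (0:ℝ))] at hy
          exact abs_of_nonpos hy.2)]
      rw [intervalIntegral.integral_neg, integral_id]
      ring
    have h2 : (∫ y in (0:ℝ)..a, |y|) = a^2/2 := by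
      rw [intervalIntegral.integral_congr (g := fun y : ℝ => y)
        (fun y hy => by
          rw [Set.uIcc_of_le (by linarith : (0:ℝ) ≤ a)] at hy
          exact abs_of_nonneg hy.1)]
      rw [integral_id]
      ring
    rw [← intervalIntegral.integral_add_adjacent_intervals (b := (0:ℝ))
      (continuous_abs.intervalIntegrable _ _) (continuous_abs.intervalIntegrable _ _),
      h1, h2]
    ring
  -- pointwise tail bound
  have hTail : ∀ y : ℝ, y ≠ 0 → |y| ≤ 1/2 → |g y| ≤ M / (4*N) * (y^2)⁻¹ := by
    intro y h0 h2
    rw [hgabs y]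
    calc |θ (x - y)| * fejerKernel n y
        ≤ M * ((1 / (4 * N)) * (y ^ 2)⁻¹) :=
          mul_le_mul (hMb _) (fejerKernel_le_tail n hn0 h0 h2) (hFnn y) hM0
      _ = M / (4*N) * (y^2)⁻¹ := by ring
  -- pointwise middle bound
  have hMid : ∀ y : ℝ, |g y| ≤ N^2 * |y| := by
    intro y
    rw [hgabs y]
    calc |θ (x - y)| * fejerKernel n y
        ≤ (N * |y|) * N := by
          apply mul_le_mul _ (hFle y) (hFnn y) (by positivity)
          have := hlip' (x - y)
          simpa using this
      _ = N^2 * |y| := by ring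
  -- tail bound-function integrability
  have htailcont : ∀ c d : ℝ, (0:ℝ) ∉ Set.uIcc c d →
      IntervalIntegrable (fun y : ℝ => M / (4*N) * (y^2)⁻¹) MeasureTheory.volume c d := by
    intro c d h
    apply ContinuousOn.intervalIntegrable
    apply ContinuousOn.mul continuousOn_const
    apply ContinuousOn.inv₀ (continuousOn_id.pow 2)
    intro y hy
    exact pow_ne_zero 2 (fun hy0 => h (hy0 ▸ hy))
  -- three pieces
  have hP3 : (∫ y in a..(1/2:ℝ), |g y|) ≤ M/8 := by
    have hnot : (0:ℝ) ∉ Set.uIcc a (1/2:ℝ) := by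
      rw [Set.uIcc_of_le ha2]
      intro h
      exact absurd h.1 (by linarith)
    calc (∫ y in a..(1/2:ℝ), |g y|)
        ≤ ∫ y in a..(1/2:ℝ), M / (4*N) * (y^2)⁻¹ := by
          apply intervalIntegral.integral_mono_on ha2 (hsub a (1/2) (by linarith) ha2 le_rfl)
            (htailcont a (1/2) hnot)
          intro y hy
          exact hTail y (by linarith [hy.1]) (abs_le.2 ⟨by linarith [hy.1], hy.2⟩)
      _ = M / (4*N) * (a⁻¹ - (1/2:ℝ)⁻¹) := by
          rw [intervalIntegral.integral_const_mul, hzpow a (1/2) hnot]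
      _ = M / (4*N) * (N/2 - 2) := by
          rw [hadef]
          field_simp
      _ ≤ M/8 := by
          have h1 : M / (4*N) * (N/2 - 2) ≤ M / (4*N) * (N/2) := by
            apply mul_le_mul_of_nonneg_left (by linarith) (by positivity)
          have h2 : M / (4*N) * (N/2) = M/8 := by field_simp; ring
          linarith
  have hP1 : (∫ y in (-(1/2):ℝ)..(-a), |g y|) ≤ M/8 := by
    have hnot : (0:ℝ) ∉ Set.uIcc (-(1/2):ℝ) (-a) := by
      rw [Set.uIcc_of_le (by linarith)]
      intro h
      exact absurd h.2 (by simp; linarith)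
    calc (∫ y in (-(1/2):ℝ)..(-a), |g y|)
        ≤ ∫ y in (-(1/2):ℝ)..(-a), M / (4*N) * (y^2)⁻¹ := by
          apply intervalIntegral.integral_mono_on (by linarith)
            (hsub (-(1/2)) (-a) le_rfl (by linarith) (by linarith))
            (htailcont _ _ hnot)
          intro y hy
          apply hTail y (by intro h; rw [h] at hy; exact absurd hy.2 (by simp; linarith))
          rw [abs_le]
          exact ⟨hy.1, by linarith [hy.2]⟩
      _ = M / (4*N) * ((-(1/2):ℝ)⁻¹ - (-a)⁻¹) := by
          rw [intervalIntegral.integral_const_mul, hzpow _ _ hnot]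
      _ = M / (4*N) * (N/2 - 2) := by
          rw [hadef]
          field_simp
          ring
      _ ≤ M/8 := by
          have h1 : M / (4*N) * (N/2 - 2) ≤ M / (4*N) * (N/2) := by
            apply mul_le_mul_of_nonneg_left (by linarith) (by positivity)
          have h2 : M / (4*N) * (N/2) = M/8 := by field_simp; ring
          linarith
  have hP2 : (∫ y in (-a)..a, |g y|) ≤ 4 := by
    calc (∫ y in (-a)..a, |g y|)
        ≤ ∫ y in (-a)..a, N^2 * |y| := by
          apply intervalIntegral.integral_mono_on (by linarith)
            (hsub (-a) a (by linarith) (by linarith) (by linarith))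
            ((continuous_const.mul continuous_abs).intervalIntegrable _ _)
          intro y _
          exact hMid y
      _ = N^2 * a^2 := by
          rw [intervalIntegral.integral_const_mul, habsint]
      _ = 4 := by
          rw [hadef]
          field_simp
          ring
  -- split and conclude
  have hsplit : (∫ y in (-(1/2):ℝ)..(1/2), |g y|) =
      (∫ y in (-(1/2):ℝ)..(-a), |g y|) + (∫ y in (-a)..a, |g y|) +
        (∫ y in a..(1/2:ℝ), |g y|) := by
    have e1 := intervalIntegral.integral_add_adjacent_intervals
        (hsub (-a) a (by linarith) (by linarith) (by linarith))
        (hsub a (1/2) (by linarith) ha2 le_rfl)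
    have e2 := intervalIntegral.integral_add_adjacent_intervals
        (hsub (-(1/2)) (-a) le_rfl (by linarith) (by linarith))
        (hsub (-a) (1/2) (by linarith) (by linarith) le_rfl)
    rw [← e2, ← e1]
    ring
  have habs : |fejerMean n θ x| ≤ ∫ y in (-(1/2):ℝ)..(1/2), |g y| := by
    rw [fejerMean]
    exact intervalIntegral.abs_integral_le_integral_abs (by norm_num)
  calc |fejerMean n θ x| ≤ ∫ y in (-(1/2):ℝ)..(1/2), |g y| := habs
    _ = _ + _ + _ := hsplit
    _ ≤ M/8 + 4 + M/8 := by
        gcongr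
    _ ≤ 4 + M / 4 := by linarith
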